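/- For every n divisible by 5, there exists a graph G on n vertices with no independent set of size 3 such that the number of 4-cliques of G is at most (1/200)n⁴ + (1/100)n³. -/

import Mathlib

open Finset

attribute [local instance] Classical.propDecidable


lemma tri5 : ∀ x y z : Fin 5,
    ¬(x = y ∨ x = y + 1 ∨ y = x + 1) → ¬(y = z ∨ y = z + 1 ∨ z = y + 1) →
    ¬(x = z ∨ x = z + 1 ∨ z = x + 1) → False := by decide

lemma key5 : ∀ A : Finset (Fin 5), A.Nonempty →
    (∀ x ∈ A, ∀ y ∈ A, x = y ∨ x = y + 1 ∨ y = x + 1) →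
    ∃ i, i ∈ A ∧ ∀ x ∈ A, x = i ∨ x = i + 1 := by decide

lemma arith (m : ℕ) : 1000 * ((2 * m).choose 4 - m.choose 4) ≤ 625 * m ^ 4 + 250 * m ^ 3 := by
  have h1 : 24 * ((2 * m).choose 4) = (2 * m).descFactorial 4 := by
    rw [Nat.descFactorial_eq_factorial_mul_choose]; norm_num [Nat.factorial]
  have h2 : 24 * (m.choose 4) = m.descFactorial 4 := by
    rw [Nat.descFactorial_eq_factorial_mul_choose]; norm_num [Nat.factorial]
  have hle : m.choose 4 ≤ (2 * m).choose 4 := Nat.choose_le_choose 4 (by omega)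
  have : 24 * (1000 * ((2 * m).choose 4 - m.choose 4)) ≤ 24 * (625 * m ^ 4 + 250 * m ^ 3) := by
    have e : 24 * (1000 * ((2 * m).choose 4 - m.choose 4)) =
        1000 * (2 * m).descFactorial 4 - 1000 * m.descFactorial 4 := by
      rw [← h1, ← h2]; omega
    rw [e]
    have hsub : 1000 * (2 * m).descFactorial 4 ≤
        24 * (625 * m ^ 4 + 250 * m ^ 3) + 1000 * m.descFactorial 4 := by
      match m with
      | 0 => decide
      | 1 => decide
      | 2 => decide
      | (k + 3) =>
        simp only [Nat.descFactorial_succ, Nat.descFactorial_zero]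
        have e1 : 2 * (k + 3) - 3 = 2 * k + 3 := by omega
        have e2 : 2 * (k + 3) - 2 = 2 * k + 4 := by omega
        have e3 : 2 * (k + 3) - 1 = 2 * k + 5 := by omega
        have e4 : k + 3 - 3 = k := by omega
        have e5 : k + 3 - 2 = k + 1 := by omega
        have e6 : k + 3 - 1 = k + 2 := by omega
        rw [e1, e2, e3, e4, e5, e6]
        simp only [Nat.sub_zero, mul_one]
        ring_nf
        nlinarith [Nat.zero_le k, sq_nonneg k]
    omega
  omega

lemma ne_succ5 : ∀ i : Fin 5, i ≠ i + 1 := by decide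

/-- For every `n` divisible by 5, there is a graph on `n` vertices with no independent set
of size 3 (triangle-free complement) having at most `(1/200) n⁴ + (1/100) n³` 4-cliques. -/
theorem exists_graph_few_four_cliques (n : ℕ) (hn : 5 ∣ n) :
    ∃ G : SimpleGraph (Fin n), Gᶜ.CliqueFree 3 ∧
      ((G.cliqueFinset 4).card : ℝ) ≤
        (1 / 200) * (n : ℝ) ^ 4 + (1 / 100) * (n : ℝ) ^ 3 := by
  obtain ⟨m, rfl⟩ := hn
  -- the blown-up 5-cycle on `Fin 5 × Fin m`
  set G₀ : SimpleGraph (Fin 5 × Fin m) :=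
    { Adj := fun u v => u ≠ v ∧ (u.1 = v.1 ∨ u.1 = v.1 + 1 ∨ v.1 = u.1 + 1)
      symm := ⟨by rintro u v ⟨h1, h2⟩; exact ⟨h1.symm, by tauto⟩⟩
      loopless := ⟨fun u h => h.1 rfl⟩ } with hG₀
  have e : Fin 5 × Fin m ≃ Fin (5 * m) := finProdFinEquiv
  refine ⟨G₀.map e.toEmbedding, ?_, ?_⟩
  · -- complement triangle-free
    intro t ht
    obtain ⟨a, b, c, hab, hac, hbc, rfl⟩ := Finset.card_eq_three.1 ht.2
    have adj : ∀ x y : Fin (5 * m), x ≠ y → x ∈ ({a, b, c} : Finset (Fin (5 * m))) →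
        y ∈ ({a, b, c} : Finset (Fin (5 * m))) →
        ¬((e.symm x).1 = (e.symm y).1 ∨ (e.symm x).1 = (e.symm y).1 + 1 ∨
          (e.symm y).1 = (e.symm x).1 + 1) := by
      intro x y hxy hx hy hP
      have h := ht.1 hx hy hxy
      rw [SimpleGraph.compl_adj] at h
      refine h.2 ?_
      rw [SimpleGraph.map_adj]
      refine ⟨e.symm x, e.symm y, ⟨fun q => hxy ?_, hP⟩, by simp, by simp⟩
      have := congrArg e q
      simpa using this
    exact tri5 (e.symm a).1 (e.symm b).1 (e.symm c).1
      (adj a b hab (by simp) (by simp))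
      (adj b c hbc (by simp) (by simp))
      (adj a c hac (by simp) (by simp))
  · -- counting the 4-cliques
    have hcard : ((G₀.map e.toEmbedding).cliqueFinset 4).card = (G₀.cliqueFinset 4).card := by
      exact (congrArg Finset.card (SimpleGraph.cliqueFinset_map_of_equiv (G := G₀) e 4)).trans (Finset.card_map _)
    set P : Fin 5 → Finset (Fin 5 × Fin m) := fun i => ({i, i + 1} : Finset (Fin 5)) ×ˢ univ
      with hP
    set B : Fin 5 → Finset (Fin 5 × Fin m) := fun i => ({i + 1} : Finset (Fin 5)) ×ˢ univ
      with hB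
    have hBP : ∀ i, B i ⊆ P i := by
      intro i x hx
      simp only [hP, hB, Finset.mem_product, Finset.mem_singleton, Finset.mem_insert,
        Finset.mem_univ, and_true] at *
      tauto
    set T : Finset (Fin 5 × Finset (Fin 5 × Fin m)) :=
      univ.biUnion
        (fun i => ((P i).powersetCard 4 \ (B i).powersetCard 4).image (fun s => (i, s))) with hT
    have hmem : ∀ s ∈ G₀.cliqueFinset 4, ∃ i, (i, s) ∈ T := by
      intro s hs
      rw [SimpleGraph.mem_cliqueFinset_iff] at hs
      have hsne : s.Nonempty := Finset.card_pos.1 (by rw [hs.2]; norm_num)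
      obtain ⟨i, hiA, hsub⟩ := key5 (s.image Prod.fst)
        (hsne.image _)
        (by
          intro x hx y hy
          obtain ⟨u, hu, rfl⟩ := Finset.mem_image.1 hx
          obtain ⟨v, hv, rfl⟩ := Finset.mem_image.1 hy
          by_cases huv : u = v
          · subst huv; exact Or.inl rfl
          · exact (hs.1 hu hv huv).2)
      refine ⟨i, Finset.mem_biUnion.2 ⟨i, Finset.mem_univ _, Finset.mem_image.2
        ⟨s, Finset.mem_sdiff.2 ⟨?_, ?_⟩, rfl⟩⟩⟩
      · refine Finset.mem_powersetCard.2 ⟨?_, hs.2⟩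
        intro v hv
        have := hsub v.1 (Finset.mem_image_of_mem _ hv)
        simp only [hP, Finset.mem_product, Finset.mem_insert, Finset.mem_singleton,
          Finset.mem_univ, and_true]
        exact this
      · intro hcon
        obtain ⟨u, hu, hu1⟩ := Finset.mem_image.1 hiA
        have := (Finset.mem_powersetCard.1 hcon).1 hu
        simp only [hB, Finset.mem_product, Finset.mem_singleton] at this
        exact ne_succ5 i (hu1.symm.trans this.1)
    have hle : (G₀.cliqueFinset 4).card ≤ T.card := by
      refine Finset.card_le_card_of_injOn
        (fun s => ((if h : ∃ i, (i, s) ∈ T then h.choose else 0), s)) ?_ ?_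
      · intro s hs
        have h := hmem s hs
        dsimp only
        rw [dif_pos h]
        exact h.choose_spec
      · intro s _ s' _ h
        exact congrArg Prod.snd h
    have hTcard : T.card = 5 * ((2 * m).choose 4 - m.choose 4) := by
      rw [hT, Finset.card_biUnion]
      · have heach : ∀ i : Fin 5,
            (((P i).powersetCard 4 \ (B i).powersetCard 4).image (fun s => (i, s))).card
              = (2 * m).choose 4 - m.choose 4 := by
          intro i
          rw [Finset.card_image_of_injective _ (fun a b h => by
            simpa using congrArg Prod.snd h)]
          rw [Finset.card_sdiff_of_subset (Finset.powersetCard_mono (hBP i))]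
          rw [Finset.card_powersetCard, Finset.card_powersetCard]
          have hPc : (P i).card = 2 * m := by
            rw [hP]
            rw [Finset.card_product, Finset.card_univ, Fintype.card_fin]
            congr 1
            rw [Finset.card_insert_of_notMem (by simp [ne_succ5 i]), Finset.card_singleton]
          have hBc : (B i).card = m := by
            rw [hB, Finset.card_product, Finset.card_singleton, Finset.card_univ,
              Fintype.card_fin, one_mul]
          rw [hPc, hBc]
        rw [Finset.sum_congr rfl (fun i _ => heach i), Finset.sum_const, Finset.card_univ,
          Fintype.card_fin, smul_eq_mul]
      · intro i _ j _ hij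
        simp only [Finset.disjoint_left, Finset.mem_image]
        rintro x ⟨s, _, rfl⟩ ⟨s', _, hx⟩
        exact hij (congrArg Prod.fst hx).symm
    have hnat : 200 * ((G₀.map e.toEmbedding).cliqueFinset 4).card
        ≤ (5 * m) ^ 4 + 2 * (5 * m) ^ 3 := by
      have h1 : 200 * ((G₀.map e.toEmbedding).cliqueFinset 4).card
          ≤ 1000 * ((2 * m).choose 4 - m.choose 4) := by
        rw [hcard]
        calc 200 * (G₀.cliqueFinset 4).card ≤ 200 * T.card :=
              Nat.mul_le_mul_left _ hle
          _ = 1000 * ((2 * m).choose 4 - m.choose 4) := by rw [hTcard]; ring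
      refine h1.trans ((arith m).trans ?_)
      ring_nf
      omega
    have := (Nat.cast_le (α := ℝ)).2 hnat
    push_cast at this
    have hswap : (@SimpleGraph.cliqueFinset _ (SimpleGraph.map e.toEmbedding G₀) _ _
        (fun a b => Classical.propDecidable ((SimpleGraph.map e.toEmbedding G₀).Adj a b)) 4).card
        = ((SimpleGraph.map e.toEmbedding G₀).cliqueFinset 4).card := by
      congr!
    rw [← hswap] at this
    push_cast
    linarith [this]
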